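/- Let r > 0 and let differentiable functions v¹, v², v³ : ℝ → ℝ solve the circular-tractrix ODE system with parameter r together with the unit-length constraint (v¹(s))² + (v²(s))² + (v³(s))² = 1 for all s. Let a, b be nonzero real constants and let f : ℝ² → ℝ⁴ be the generalized Dini surface built from (v¹, v², v³, r, a, b). Define u : ℝ² → ℝ⁴ by u(s,φ) = R(φ)·ŵ(s), where ŵ(s) = (−v¹(s)·sin(s/r) − v²(s)·cos(s/r), v¹(s)·cos(s/r) − v²(s)·sin(s/r), v³(s), 0). Then for all (s,φ) ∈ ℝ²: ‖u(s,φ)‖ = 1, ∂f/∂s(s,φ) = v¹(s)·u(s,φ) (so u is tangent to the meridian through the point when v¹(s) ≠ 0), and f(s,φ) − u(s,φ) = (r·cos(s/r + aφ), r·sin(s/r + aφ), 0, 0); in particular the endpoints of the unit segments u drawn from the points of the surface all lie on the circle of radius r centered at the origin in the x¹x²-coordinate plane of ℝ⁴. -/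

import Mathlib

/-- The circular-tractrix ODE system with parameter `r`. -/
def SolvesCircularTractrix (r : ℝ) (v1 v2 v3 : ℝ → ℝ) : Prop :=
  (∀ s : ℝ, HasDerivAt v1 ((1 / r) * v2 s + (v1 s) ^ 2 - 1) s) ∧
  (∀ s : ℝ, HasDerivAt v2 (-(1 / r) * v1 s + v1 s * v2 s) s) ∧
  (∀ s : ℝ, HasDerivAt v3 (v1 s * v3 s) s)

/-- The block-diagonal skew-rotation matrix `R(φ)` with angles `aφ` and `bφ`. -/
noncomputable def skewRot (a b φ : ℝ) : Matrix (Fin 4) (Fin 4) ℝ :=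
  !![Real.cos (a * φ), -Real.sin (a * φ), 0, 0;
     Real.sin (a * φ),  Real.cos (a * φ), 0, 0;
     0, 0, Real.cos (b * φ), -Real.sin (b * φ);
     0, 0, Real.sin (b * φ),  Real.cos (b * φ)]

/-- The generalized Dini surface built from functions `v1, v2, v3`, radius `r`
and screw-rotation constants `a, b`: `f(s,φ) = R(φ)·c(s)`. -/
noncomputable def diniSurface (v1 v2 v3 : ℝ → ℝ) (r a b : ℝ) :
    ℝ → ℝ → EuclideanSpace ℝ (Fin 4) :=
  fun s φ => (WithLp.equiv 2 (Fin 4 → ℝ)).symm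
    ((skewRot a b φ).mulVec
      ![r * Real.cos (s / r) - v1 s * Real.sin (s / r) - v2 s * Real.cos (s / r),
        r * Real.sin (s / r) + v1 s * Real.cos (s / r) - v2 s * Real.sin (s / r),
        v3 s, 0])

theorem stmt19 (r a b : ℝ) (hr : 0 < r) (ha : a ≠ 0) (hb : b ≠ 0)
    (v1 v2 v3 : ℝ → ℝ)
    (hsol : SolvesCircularTractrix r v1 v2 v3)
    (hunit : ∀ s : ℝ, (v1 s) ^ 2 + (v2 s) ^ 2 + (v3 s) ^ 2 = 1)
    (f u : ℝ → ℝ → EuclideanSpace ℝ (Fin 4))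
    (hf : f = diniSurface v1 v2 v3 r a b)
    (hu : ∀ s φ : ℝ, u s φ = (WithLp.equiv 2 (Fin 4 → ℝ)).symm
      ((skewRot a b φ).mulVec
        ![-(v1 s) * Real.sin (s / r) - v2 s * Real.cos (s / r),
          v1 s * Real.cos (s / r) - v2 s * Real.sin (s / r),
          v3 s, 0])) :
    ∀ s φ : ℝ,
      ‖u s φ‖ = 1 ∧
      HasDerivAt (fun t => f t φ) (v1 s • u s φ) s ∧
      f s φ - u s φ = (WithLp.equiv 2 (Fin 4 → ℝ)).symm
        ![r * Real.cos (s / r + a * φ), r * Real.sin (s / r + a * φ), 0, 0] := by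
  obtain ⟨h1, h2, h3⟩ := hsol
  have hr' : r ≠ 0 := hr.ne'
  intro s φ
  refine ⟨?_, ?_, ?_⟩
  · rw [hu, EuclideanSpace.norm_eq]
    rw [show (1:ℝ) = Real.sqrt 1 from (Real.sqrt_one).symm]
    congr 1
    simp [PiLp.toLp_apply, skewRot, Matrix.mulVec, dotProduct,
      Fin.sum_univ_four, Real.norm_eq_abs, sq_abs]
    linear_combination
      ((-(v1 s) * Real.sin (s/r) - v2 s * Real.cos (s/r))^2 +
        (v1 s * Real.cos (s/r) - v2 s * Real.sin (s/r))^2) *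
          Real.sin_sq_add_cos_sq (a*φ) +
      (v3 s)^2 * Real.sin_sq_add_cos_sq (b*φ) +
      ((v1 s)^2 + (v2 s)^2) * Real.sin_sq_add_cos_sq (s/r) + hunit s
  · -- derivative
    have hdiv : HasDerivAt (fun t : ℝ => t / r) (1/r) s := (hasDerivAt_id s).div_const r
    have hS : HasDerivAt (fun t => Real.sin (t/r)) (Real.cos (s/r) * (1/r)) s :=
      by have := (Real.hasDerivAt_sin (s/r)).comp s hdiv; exact this
    have hC : HasDerivAt (fun t => Real.cos (t/r)) (-Real.sin (s/r) * (1/r)) s :=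
      by have := (Real.hasDerivAt_cos (s/r)).comp s hdiv; exact this
    have w0 : HasDerivAt
        (fun t => r * Real.cos (t/r) - v1 t * Real.sin (t/r) - v2 t * Real.cos (t/r))
        (v1 s * (-(v1 s) * Real.sin (s/r) - v2 s * Real.cos (s/r))) s := by
      have := ((hC.const_mul r).sub ((h1 s).mul hS)).sub ((h2 s).mul hC)
      refine HasDerivAt.congr_deriv this ?_
      field_simp
      ring
    have w1 : HasDerivAt
        (fun t => r * Real.sin (t/r) + v1 t * Real.cos (t/r) - v2 t * Real.sin (t/r))
        (v1 s * (v1 s * Real.cos (s/r) - v2 s * Real.sin (s/r))) s := by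
      have := ((hS.const_mul r).add ((h1 s).mul hC)).sub ((h2 s).mul hS)
      refine HasDerivAt.congr_deriv this ?_
      field_simp
      ring
    have w2 : HasDerivAt (fun t => v3 t) (v1 s * v3 s) s := h3 s
    have hc : HasDerivAt (fun t => ![r * Real.cos (t / r) - v1 t * Real.sin (t / r) - v2 t * Real.cos (t / r),
          r * Real.sin (t / r) + v1 t * Real.cos (t / r) - v2 t * Real.sin (t / r),
          v3 t, (0:ℝ)])
        ![v1 s * (-(v1 s) * Real.sin (s/r) - v2 s * Real.cos (s/r)),
          v1 s * (v1 s * Real.cos (s/r) - v2 s * Real.sin (s/r)),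
          v1 s * v3 s, 0] s := by
      apply hasDerivAt_pi.mpr
      intro i
      fin_cases i
      · simpa using w0
      · simpa using w1
      · simpa using w2
      · simpa using hasDerivAt_const s (0:ℝ)
    have hg := ((Matrix.mulVecLin (skewRot a b φ)).toContinuousLinearMap).hasFDerivAt.comp_hasDerivAt s hc
    simp only [LinearMap.coe_toContinuousLinearMap', Matrix.mulVecLin_apply] at hg
    have hcomp := ((PiLp.continuousLinearEquiv 2 ℝ (fun _ : Fin 4 => ℝ)).symm :
      (Fin 4 → ℝ) →L[ℝ] EuclideanSpace ℝ (Fin 4)).hasFDerivAt.comp_hasDerivAt s hg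
    simp only [ContinuousLinearEquiv.coe_coe, PiLp.continuousLinearEquiv_symm_apply] at hcomp
    rw [hf]
    unfold diniSurface
    refine HasDerivAt.congr_deriv hcomp ?_
    ext i
    fin_cases i <;>
      simp [hu, skewRot, Matrix.mulVec, dotProduct, Fin.sum_univ_four,
        PiLp.toLp_apply] <;>
      ring
  · rw [hf]
    unfold diniSurface
    ext i
    fin_cases i <;>
      simp [hu, PiLp.sub_apply, PiLp.toLp_apply,
        skewRot, Matrix.mulVec, dotProduct, Fin.sum_univ_four,
        Real.cos_add, Real.sin_add] <;>
      ring
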